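/- There exists a unique θ_c > 0 (with θ_c ∈ (0.141, 0.142)) such that: if 0 < θ < θ_c then the cubic equation θy³ − y² + (θ² + 1)y − 2θ = 0 has exactly three real solutions y₃ < y₂ < y₁, all positive; if θ = θ_c then it has exactly two positive solutions y₂ < y₁; and if θ > θ_c then it has exactly one positive solution y₁. -/

import Mathlib

open Set

/-- The cubic. -/
def Fc (θ y : ℝ) : ℝ := θ * y ^ 3 - y ^ 2 + (θ ^ 2 + 1) * y - 2 * θ

/-- The discriminant of the cubic, as a polynomial in θ. -/
def Dc (θ : ℝ) : ℝ :=
  -4*θ^7 - 12*θ^5 - 71*θ^4 - 12*θ^3 + 38*θ^2 - 12*θ + 1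

lemma contD : Continuous Dc := by unfold Dc; continuity

lemma contF (θ : ℝ) : Continuous (Fc θ) := by unfold Fc; continuity

lemma D_141 : 0 < Dc 0.141 := by norm_num [Dc]

lemma D_142 : Dc 0.142 < 0 := by norm_num [Dc]

lemma D_anti {x y : ℝ} (hx : 0 < x) (hxy : x < y) (hy : y ≤ 0.15) : Dc y < Dc x := by
  have hy0 : 0 < y := hx.trans hxy
  have key : Dc x - Dc y = (y - x) * (12 - 38*(x+y)
      + 12*(x^2+x*y+y^2) + 71*(x^3+x^2*y+x*y^2+y^3)
      + 12*(x^4+x^3*y+x^2*y^2+x*y^3+y^4)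
      + 4*(x^6+x^5*y+x^4*y^2+x^3*y^3+x^2*y^4+x*y^5+y^6)) := by
    unfold Dc; ring
  have hxy' : x + y ≤ 0.3 := by linarith
  have t1 : 0 < 12 - 38*(x+y)
      + 12*(x^2+x*y+y^2) + 71*(x^3+x^2*y+x*y^2+y^3)
      + 12*(x^4+x^3*y+x^2*y^2+x*y^3+y^4)
      + 4*(x^6+x^5*y+x^4*y^2+x^3*y^3+x^2*y^4+x*y^5+y^6) := by
    have m1 : (0:ℝ) ≤ x := hx.le
    have m2 : (0:ℝ) ≤ y := hy0.le
    have h2 : (0:ℝ) ≤ x^2+x*y+y^2 := by positivity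
    have h3 : (0:ℝ) ≤ x^3+x^2*y+x*y^2+y^3 := by positivity
    have h4 : (0:ℝ) ≤ x^4+x^3*y+x^2*y^2+x*y^3+y^4 := by positivity
    have h6 : (0:ℝ) ≤ x^6+x^5*y+x^4*y^2+x^3*y^3+x^2*y^4+x*y^5+y^6 := by positivity
    nlinarith
  nlinarith [mul_pos (sub_pos.2 hxy) t1]

lemma D_neg_of_ge {θ : ℝ} (h : (0.15:ℝ) ≤ θ) : Dc θ < 0 := by
  have h0 : (0:ℝ) < θ := by linarith
  have h1 : -4*θ^7 - 12*θ^5 ≤ 0 := by nlinarith [pow_pos h0 7, pow_pos h0 5]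
  have h2 : -71*θ^4 - 12*θ^3 + 38*θ^2 - 12*θ + 1 < 0 := by
    nlinarith [sq_nonneg (θ - 0.3), sq_nonneg (θ^2 - 0.09), mul_nonneg (sub_nonneg.2 h) (sq_nonneg (θ - 0.3)), sq_nonneg (θ^2 + θ - 0.2), mul_nonneg (sub_nonneg.2 h) (sq_nonneg (θ - 0.15))]
  unfold Dc; linarith

lemma factor (θ a b c : ℝ) (h1 : θ * (a + b + c) = 1)
    (hE : θ*(a^2 + a*b + b^2) - (a+b) + θ^2 + 1 = 0) (ha : Fc θ a = 0) (y : ℝ) :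
    Fc θ y = θ * ((y - a) * (y - b) * (y - c)) := by
  unfold Fc at *
  linear_combination (y^2 - y*(a+b) + a*b) * h1 + (y - a) * hE + ha

lemma divdiff {θ a b : ℝ} (hab : a ≠ b) (ha : Fc θ a = 0) (hb : Fc θ b = 0) :
    θ*(a^2 + a*b + b^2) - (a+b) + θ^2 + 1 = 0 := by
  have h : (a - b) * (θ*(a^2 + a*b + b^2) - (a+b) + θ^2 + 1) = 0 := by
    unfold Fc at ha hb; linear_combination ha - hb
  rcases mul_eq_zero.1 h with h' | h'
  · exact absurd (sub_eq_zero.1 h') hab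
  · exact h'

lemma factor_two {θ a b : ℝ} (hθ : θ ≠ 0) (hab : a ≠ b)
    (ha : Fc θ a = 0) (hb : Fc θ b = 0) (y : ℝ) :
    Fc θ y = θ * ((y - a) * (y - b) * (y - (1/θ - a - b))) := by
  apply factor θ a b _ _ (divdiff hab ha hb) ha
  field_simp; ring

lemma disc_nonneg {θ a b : ℝ} (hθ : 0 < θ) (hab : a ≠ b)
    (ha : Fc θ a = 0) (hb : Fc θ b = 0) : 0 ≤ Dc θ := by
  have hθ' : θ ≠ 0 := hθ.ne'
  obtain ⟨c, hc⟩ : ∃ c : ℝ, c = 1/θ - a - b := ⟨_, rfl⟩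
  have hfac : ∀ y, Fc θ y = θ * ((y - a) * (y - b) * (y - c)) := fun y => by
    rw [hc]; exact factor_two hθ' hab ha hb y
  have hs1 : a + b + c = 1/θ := by rw [hc]; ring
  have hs2 : a*b + b*c + c*a = (θ^2+1)/θ := by
    have e1 := hfac 1
    have e2 := hfac (-1)
    unfold Fc at e1 e2
    have h2 : θ * (a*b + b*c + c*a) = θ^2 + 1 := by linear_combination (e2 - e1)/2
    field_simp
    linear_combination h2
  have hs3 : a*b*c = 2 := by
    have e0 := hfac 0
    unfold Fc at e0
    have h3 : θ * (a*b*c) = θ * 2 := by linear_combination e0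
    exact mul_left_cancel₀ hθ' h3
  have hpoly : ((a-b)*(b-c)*(c-a))^2 =
      (a+b+c)^2*(a*b+b*c+c*a)^2 - 4*(a*b+b*c+c*a)^3 - 4*(a+b+c)^3*(a*b*c)
      + 18*(a+b+c)*(a*b+b*c+c*a)*(a*b*c) - 27*(a*b*c)^2 := by ring
  rw [hs1, hs2, hs3] at hpoly
  have key : θ^4 * ((a-b)*(b-c)*(c-a))^2 = Dc θ := by
    rw [hpoly]; unfold Dc; field_simp; ring
  rw [← key]
  positivity
lemma crit {θ : ℝ} (h0 : 0 < θ) (h15 : θ ≤ 0.15) :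
    ∃ p q : ℝ, 0 < p ∧ p < q ∧ q < 1/θ ∧
      (3*θ*p^2 - 2*p + (θ^2+1) = 0) ∧ (3*θ*q^2 - 2*q + (θ^2+1) = 0) ∧
      (3*θ*p ≠ 1) ∧ (3*θ*q ≠ 1) ∧
      (9*θ*Fc θ p) * (9*θ*Fc θ q) = -3*Dc θ ∧ Fc θ q < Fc θ p := by
  have harg : (0:ℝ) < 1 - 3*θ*(θ^2+1) := by nlinarith
  set s : ℝ := Real.sqrt (1 - 3*θ*(θ^2+1)) with hsdef
  have hs2 : s^2 = 1 - 3*θ*(θ^2+1) := Real.sq_sqrt harg.le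
  have hs0 : 0 < s := Real.sqrt_pos.2 harg
  have hs1 : s < 1 := by nlinarith
  have h3θ : (0:ℝ) < 3*θ := by linarith
  have hθ' : θ ≠ 0 := h0.ne'
  obtain ⟨p, hpdef⟩ : ∃ p : ℝ, p = (1-s)/(3*θ) := ⟨_, rfl⟩
  obtain ⟨q, hqdef⟩ : ∃ q : ℝ, q = (1+s)/(3*θ) := ⟨_, rfl⟩
  have h3p : 3*θ*p = 1 - s := by rw [hpdef]; field_simp
  have h3q : 3*θ*q = 1 + s := by rw [hqdef]; field_simp
  have hθinv : θ * (1/θ) = 1 := by field_simp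
  have hp0 : 0 < p := by nlinarith
  have hpq : p < q := by nlinarith
  have hqM : q < 1/θ := by nlinarith
  have hp' : 3*θ*p^2 - 2*p + (θ^2+1) = 0 := by
    have h9 : (3*θ) * (3*θ*p^2 - 2*p + (θ^2+1)) = 0 := by
      linear_combination (3*θ*p + 1 - s - 2) * h3p + hs2
    exact (mul_eq_zero.1 h9).resolve_left (by positivity)
  have hq' : 3*θ*q^2 - 2*q + (θ^2+1) = 0 := by
    have h9 : (3*θ) * (3*θ*q^2 - 2*q + (θ^2+1)) = 0 := by
      linear_combination (3*θ*q + 1 + s - 2) * h3q + hs2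
    exact (mul_eq_zero.1 h9).resolve_left (by positivity)
  have hpne : 3*θ*p ≠ 1 := by rw [h3p]; intro h; linarith
  have hqne : 3*θ*q ≠ 1 := by rw [h3q]; intro h; linarith
  have hfp : 9*θ*Fc θ p = (6*θ*(θ^2+1) - 2)*p + ((θ^2+1) - 18*θ^2) := by
    unfold Fc; linear_combination (3*θ*p - 1) * hp'
  have hfq : 9*θ*Fc θ q = (6*θ*(θ^2+1) - 2)*q + ((θ^2+1) - 18*θ^2) := by
    unfold Fc; linear_combination (3*θ*q - 1) * hq'
  have hsum : p + q = 2/(3*θ) := by rw [hpdef, hqdef]; field_simp; ring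
  have hprodv : p*q = (θ^2+1)/(3*θ) := by
    rw [hpdef, hqdef]; field_simp; linear_combination -hs2
  have hA : 6*θ*(θ^2+1) - 2 < 0 := by nlinarith
  have hprodFF : (9*θ*Fc θ p) * (9*θ*Fc θ q) = -3*Dc θ := by
    rw [hfp, hfq]
    have expand : ((6*θ*(θ^2+1) - 2)*p + ((θ^2+1) - 18*θ^2)) *
        ((6*θ*(θ^2+1) - 2)*q + ((θ^2+1) - 18*θ^2))
        = (6*θ*(θ^2+1) - 2)^2*(p*q)
          + (6*θ*(θ^2+1) - 2)*((θ^2+1) - 18*θ^2)*(p+q) + ((θ^2+1) - 18*θ^2)^2 := by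
      ring
    rw [expand, hsum, hprodv]; unfold Dc; field_simp; ring
  have hlt : Fc θ q < Fc θ p := by
    have hdiff : 9*θ*Fc θ p - 9*θ*Fc θ q = (6*θ*(θ^2+1) - 2)*(p - q) := by
      rw [hfp, hfq]; ring
    nlinarith [mul_pos_of_neg_of_neg hA (sub_neg.2 hpq)]
  exact ⟨p, q, hp0, hpq, hqM, hp', hq', hpne, hqne, hprodFF, hlt⟩
lemma F_zero_neg {θ : ℝ} (h0 : 0 < θ) : Fc θ 0 < 0 := by unfold Fc; nlinarith

lemma F_M_pos {θ : ℝ} (h0 : 0 < θ) : 0 < Fc θ (1/θ + 2) := by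
  have hθM : θ * (1/θ + 2) = 1 + 2*θ := by field_simp
  have hM1 : (1:ℝ) < 1/θ + 2 := by
    have : (0:ℝ) < 1/θ := by positivity
    linarith
  unfold Fc
  nlinarith [sq_nonneg (1/θ + 2), mul_pos h0 (mul_pos (lt_trans one_pos hM1) (lt_trans one_pos hM1))]

/-- Three distinct roots when the discriminant is positive. -/
lemma three_roots {θ : ℝ} (h0 : 0 < θ) (h15 : θ ≤ 0.15) (hD : 0 < Dc θ) :
    ∃ y₁ y₂ y₃ : ℝ, y₃ < y₂ ∧ y₂ < y₁ ∧ 0 < y₃ ∧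
      {y : ℝ | Fc θ y = 0} = {y₁, y₂, y₃} := by
  obtain ⟨p, q, hp0, hpq, hqM, hp', hq', hpne, hqne, hprodFF, hlt⟩ := crit h0 h15
  have hprodneg : (9*θ*Fc θ p) * (9*θ*Fc θ q) < 0 := by rw [hprodFF]; linarith
  have h9θ : (0:ℝ) < 9*θ := by linarith
  have hFp : 0 < Fc θ p := by
    by_contra hle
    push_neg at hle
    have h1 : 9*θ*Fc θ p ≤ 0 := by nlinarith
    have h2 : 9*θ*Fc θ q < 0 := by nlinarith
    nlinarith [mul_nonneg (neg_nonneg.2 h1) (neg_nonneg.2 h2.le)]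
  have hFq : Fc θ q < 0 := by
    by_contra hle
    push_neg at hle
    have h1 : 0 < 9*θ*Fc θ p := by nlinarith
    have h2 : 0 ≤ 9*θ*Fc θ q := by nlinarith
    nlinarith [mul_nonneg h1.le h2]
  have hM : q < 1/θ + 2 := by linarith
  -- root in (0, p)
  obtain ⟨r₁, hr₁, hFr₁⟩ := intermediate_value_Ioo hp0.le (contF θ).continuousOn
    (Set.mem_Ioo.2 ⟨F_zero_neg h0, hFp⟩)
  -- root in (p, q)
  obtain ⟨r₂, hr₂, hFr₂⟩ := intermediate_value_Ioo' hpq.le (contF θ).continuousOn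
    (Set.mem_Ioo.2 ⟨hFq, hFp⟩)
  -- root in (q, M)
  obtain ⟨r₃, hr₃, hFr₃⟩ := intermediate_value_Ioo hM.le (contF θ).continuousOn
    (Set.mem_Ioo.2 ⟨hFq, F_M_pos h0⟩)
  have h12 : r₁ < r₂ := lt_trans hr₁.2 hr₂.1
  have h23 : r₂ < r₃ := lt_trans hr₂.2 hr₃.1
  refine ⟨r₃, r₂, r₁, h12, h23, hr₁.1, ?_⟩
  have hfac := factor_two (a := r₁) (b := r₂) h0.ne' (ne_of_lt h12) hFr₁ hFr₂
  have hc3 : r₃ = 1/θ - r₁ - r₂ := by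
    have h := hfac r₃
    rw [hFr₃] at h
    have hz : (r₃ - r₁) * (r₃ - r₂) * (r₃ - (1/θ - r₁ - r₂)) = 0 := by
      rcases mul_eq_zero.1 h.symm with h' | h'
      · exact absurd h' h0.ne'
      · exact h'
    rcases mul_eq_zero.1 hz with h' | h'
    · exfalso
      rcases mul_eq_zero.1 h' with h'' | h''
      · exact (ne_of_gt (h12.trans h23)) (sub_eq_zero.1 h'')
      · exact (ne_of_gt h23) (sub_eq_zero.1 h'')
    · exact sub_eq_zero.1 h'
  ext y
  simp only [Set.mem_setOf_eq, Set.mem_insert_iff, Set.mem_singleton_iff]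
  constructor
  · intro hy
    have h := hfac y
    rw [hy] at h
    have hz : (y - r₁) * (y - r₂) * (y - (1/θ - r₁ - r₂)) = 0 :=
      ((mul_eq_zero.1 h.symm).resolve_left h0.ne')
    rcases mul_eq_zero.1 hz with h' | h'
    · rcases mul_eq_zero.1 h' with h'' | h''
      · exact Or.inr (Or.inr (sub_eq_zero.1 h''))
      · exact Or.inr (Or.inl (sub_eq_zero.1 h''))
    · exact Or.inl (by rw [hc3]; exact sub_eq_zero.1 h')
  · rintro (rfl | rfl | rfl)
    · exact hFr₃
    · exact hFr₂
    · exact hFr₁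
/-- At the critical parameter there are exactly two positive roots. -/
lemma two_roots {θ : ℝ} (h0 : 0 < θ) (h15 : θ ≤ 0.15) (hD : Dc θ = 0) :
    ∃ y₁ y₂ : ℝ, y₂ < y₁ ∧ {y : ℝ | 0 < y ∧ Fc θ y = 0} = {y₁, y₂} := by
  obtain ⟨p, q, hp0, hpq, hqM, hp', hq', hpne, hqne, hprodFF, hlt⟩ := crit h0 h15
  have hq0 : 0 < q := hp0.trans hpq
  have hprod0 : (9*θ*Fc θ p) * (9*θ*Fc θ q) = 0 := by rw [hprodFF, hD]; ring
  have h9θ : (9*θ : ℝ) ≠ 0 := by positivity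
  have hm : ∃ m : ℝ, 0 < m ∧ Fc θ m = 0 ∧ (3*θ*m^2 - 2*m + (θ^2+1) = 0) ∧ 3*θ*m ≠ 1 := by
    rcases mul_eq_zero.1 hprod0 with h | h
    · exact ⟨p, hp0, (mul_eq_zero.1 h).resolve_left h9θ, hp', hpne⟩
    · exact ⟨q, hq0, (mul_eq_zero.1 h).resolve_left h9θ, hq', hqne⟩
  obtain ⟨m, hm0, hmF, hm', hmne⟩ := hm
  obtain ⟨r, hrdef⟩ : ∃ r : ℝ, r = 1/θ - 2*m := ⟨_, rfl⟩
  have h1 : θ * (m + m + r) = 1 := by rw [hrdef]; field_simp; ring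
  have hE : θ*(m^2 + m*m + m^2) - (m+m) + θ^2 + 1 = 0 := by linear_combination hm'
  have hfac := factor θ m m r h1 hE hmF
  have hm2r : m^2 * r = 2 := by
    apply mul_left_cancel₀ h0.ne'
    have h := hfac 0
    unfold Fc at h
    linear_combination h
  have hr0 : 0 < r := by nlinarith [sq_nonneg m, mul_pos hm0 hm0]
  have hmr : m ≠ r := by
    intro h
    apply hmne
    rw [← h] at h1
    linarith [h1]
  have hFr : Fc θ r = 0 := by rw [hfac r]; ring
  refine ⟨max m r, min m r, min_lt_max.2 hmr, ?_⟩
  ext y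
  simp only [Set.mem_setOf_eq, Set.mem_insert_iff, Set.mem_singleton_iff]
  constructor
  · rintro ⟨hy0, hyF⟩
    have h := hfac y
    rw [hyF] at h
    have hz : (y - m) * (y - m) * (y - r) = 0 := (mul_eq_zero.1 h.symm).resolve_left h0.ne'
    have : y = m ∨ y = r := by
      rcases mul_eq_zero.1 hz with h' | h'
      · rcases mul_eq_zero.1 h' with h'' | h'' <;> exact Or.inl (sub_eq_zero.1 h'')
      · exact Or.inr (sub_eq_zero.1 h')
    rcases le_total m r with hle | hle
    · rcases this with rfl | rfl
      · right; simp [min_eq_left hle]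
      · left; simp [max_eq_right hle]
    · rcases this with rfl | rfl
      · left; simp [max_eq_left hle]
      · right; simp [min_eq_right hle]
  · rintro (rfl | rfl)
    · rcases le_total m r with hle | hle
      · simp only [max_eq_right hle]; exact ⟨hr0, hFr⟩
      · simp only [max_eq_left hle]; exact ⟨hm0, hmF⟩
    · rcases le_total m r with hle | hle
      · simp only [min_eq_left hle]; exact ⟨hm0, hmF⟩
      · simp only [min_eq_right hle]; exact ⟨hr0, hFr⟩

/-- A unique positive root when the discriminant is negative. -/
lemma unique_root {θ : ℝ} (h0 : 0 < θ) (hD : Dc θ < 0) :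
    ∃! y : ℝ, 0 < y ∧ Fc θ y = 0 := by
  have hM0 : (0:ℝ) < 1/θ + 2 := by positivity
  obtain ⟨r, hr, hFr⟩ := intermediate_value_Ioo hM0.le (contF θ).continuousOn
    (Set.mem_Ioo.2 ⟨F_zero_neg h0, F_M_pos h0⟩)
  refine ⟨r, ⟨hr.1, hFr⟩, ?_⟩
  rintro z ⟨hz0, hzF⟩
  by_contra hne
  exact absurd (disc_nonneg h0 hne hzF hFr) (not_le.2 hD)

lemma no_both {α β : ℝ} (hαβ : α < β) (hα0 : 0 < α)
    (h3 : ∀ θ : ℝ, 0 < θ → θ < β →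
      ∃ y₁ y₂ y₃ : ℝ, y₃ < y₂ ∧ y₂ < y₁ ∧ 0 < y₃ ∧
        {y : ℝ | θ * y ^ 3 - y ^ 2 + (θ ^ 2 + 1) * y - 2 * θ = 0} = {y₁, y₂, y₃})
    (h2 : ∃ y₁ y₂ : ℝ, y₂ < y₁ ∧
      {y : ℝ | 0 < y ∧ α * y ^ 3 - y ^ 2 + (α ^ 2 + 1) * y - 2 * α = 0} = {y₁, y₂}) :
    False := by
  obtain ⟨z₁, z₂, z₃, h32, h21, hz3, hset⟩ := h3 α hα0 hαβ
  obtain ⟨y₁, y₂, hy21, hset2⟩ := h2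
  have hz2 : 0 < z₂ := hz3.trans h32
  have hz1 : 0 < z₁ := hz2.trans h21
  have mem : ∀ z : ℝ, 0 < z → z ∈ ({z₁, z₂, z₃} : Set ℝ) → z = y₁ ∨ z = y₂ := by
    intro z hz0 hz
    have hroot : z ∈ {y : ℝ | α * y ^ 3 - y ^ 2 + (α ^ 2 + 1) * y - 2 * α = 0} := by
      rw [hset]; exact hz
    have : z ∈ ({y₁, y₂} : Set ℝ) := by
      rw [← hset2]; exact ⟨hz0, hroot⟩
    simpa using this
  have m1 := mem z₁ hz1 (by simp)
  have m2 := mem z₂ hz2 (by simp)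
  have m3 := mem z₃ hz3 (by simp)
  rcases m1 with h1 | h1 <;> rcases m2 with h2 | h2 <;> rcases m3 with h3 | h3 <;> linarith

/-- There is a unique `θ_c > 0` (lying in `(0.141, 0.142)`) such that the
cubic `θ y³ - y² + (θ² + 1) y - 2θ = 0` has exactly three (positive) real solutions for
`0 < θ < θ_c`, exactly two positive solutions at `θ = θ_c`, and exactly one positive
solution for `θ > θ_c`. -/
theorem sos_cubic_root_classification :
    ∃! θc : ℝ, 0 < θc ∧ θc ∈ Set.Ioo (0.141 : ℝ) 0.142 ∧
      (∀ θ : ℝ, 0 < θ → θ < θc →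
        ∃ y₁ y₂ y₃ : ℝ, y₃ < y₂ ∧ y₂ < y₁ ∧ 0 < y₃ ∧
          {y : ℝ | θ * y ^ 3 - y ^ 2 + (θ ^ 2 + 1) * y - 2 * θ = 0} = {y₁, y₂, y₃}) ∧
      (∃ y₁ y₂ : ℝ, y₂ < y₁ ∧
        {y : ℝ | 0 < y ∧ θc * y ^ 3 - y ^ 2 + (θc ^ 2 + 1) * y - 2 * θc = 0} = {y₁, y₂}) ∧
      (∀ θ : ℝ, θc < θ →
        ∃! y : ℝ, 0 < y ∧ θ * y ^ 3 - y ^ 2 + (θ ^ 2 + 1) * y - 2 * θ = 0) := by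
  have hab : (0.141 : ℝ) ≤ 0.142 := by norm_num
  obtain ⟨θc, hIoo, hDc⟩ := intermediate_value_Ioo' hab contD.continuousOn
    (Set.mem_Ioo.2 ⟨D_142, D_141⟩)
  have hθc0 : 0 < θc := lt_trans (by norm_num) hIoo.1
  have hθc15 : θc ≤ 0.15 := le_of_lt (lt_of_lt_of_le hIoo.2 (by norm_num))
  -- clause 3
  have C3 : ∀ θ : ℝ, 0 < θ → θ < θc →
      ∃ y₁ y₂ y₃ : ℝ, y₃ < y₂ ∧ y₂ < y₁ ∧ 0 < y₃ ∧
        {y : ℝ | θ * y ^ 3 - y ^ 2 + (θ ^ 2 + 1) * y - 2 * θ = 0} = {y₁, y₂, y₃} := by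
    intro θ h0 hθ
    have hD : 0 < Dc θ := by
      have := D_anti h0 hθ hθc15
      rw [hDc] at this
      linarith
    simpa only [Fc] using three_roots h0 (by linarith) hD
  -- clause 4
  have C2 : ∃ y₁ y₂ : ℝ, y₂ < y₁ ∧
      {y : ℝ | 0 < y ∧ θc * y ^ 3 - y ^ 2 + (θc ^ 2 + 1) * y - 2 * θc = 0} = {y₁, y₂} := by
    simpa only [Fc] using two_roots hθc0 hθc15 hDc
  -- clause 5
  have C1 : ∀ θ : ℝ, θc < θ →
      ∃! y : ℝ, 0 < y ∧ θ * y ^ 3 - y ^ 2 + (θ ^ 2 + 1) * y - 2 * θ = 0 := by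
    intro θ hθ
    have h0 : 0 < θ := hθc0.trans hθ
    have hD : Dc θ < 0 := by
      rcases le_or_gt θ 0.15 with h | h
      · have := D_anti hθc0 hθ h
        rw [hDc] at this
        linarith
      · exact D_neg_of_ge h.le
    simpa only [Fc] using unique_root h0 hD
  refine ⟨θc, ⟨hθc0, hIoo, C3, C2, C1⟩, ?_⟩
  rintro θ' ⟨h0', hIoo', C3', C2', C1'⟩
  by_contra hne
  rcases lt_or_gt_of_ne hne with hlt | hlt
  · exact no_both hlt h0' C3 C2'
  · exact no_both hlt hθc0 C3' C2
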